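/- For every real β with 1 < β ≤ 2, every real number x in the interval [-1/(β-1), 1/(β-1)] admits a sequence (b_j) with b_j ∈ {-1,1} such that x = ∑_{j=1}^∞ b_j β^{-j}. -/

import Mathlib

/-- Greedy β-expansion remainder sequence. -/
noncomputable def betaY (β x : ℝ) : ℕ → ℝ
  | 0 => x
  | n + 1 => β * betaY β x n - (if 0 ≤ betaY β x n then 1 else -1)

/-- Every real `x` in `[-1/(β-1), 1/(β-1)]` admits an expansion
`x = ∑_{j=1}^∞ b_j β^{-j}` with bits `b_j ∈ {-1,1}`, for `1 < β ≤ 2`. -/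
theorem beta_expansion_exists (β : ℝ) (hβ1 : 1 < β) (hβ2 : β ≤ 2) (x : ℝ)
    (hx : x ∈ Set.Icc (-(1 / (β - 1))) (1 / (β - 1))) :
    ∃ b : ℕ → ℝ, (∀ j, b j = -1 ∨ b j = 1) ∧
      x = ∑' j : ℕ, b j * β ^ (-(j : ℤ) - 1) := by
  obtain ⟨hxl, hxr⟩ := hx
  have hβ0 : (0:ℝ) < β := lt_trans one_pos hβ1
  have hβne : β ≠ 0 := ne_of_gt hβ0
  have hβ1' : (0:ℝ) < β - 1 := sub_pos.mpr hβ1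
  set M := 1 / (β - 1) with hM
  have hM1 : 1 ≤ M := by
    rw [hM, le_div_iff₀ hβ1']; linarith
  have key : β * M = M + 1 := by rw [hM]; field_simp; ring
  set b : ℕ → ℝ := fun j => if 0 ≤ betaY β x j then 1 else -1 with hb
  have hbn : ∀ n, b n = if 0 ≤ betaY β x n then 1 else -1 := fun n => rfl
  -- invariant
  have inv : ∀ n, |betaY β x n| ≤ M := by
    intro n
    induction n with
    | zero => rw [abs_le]; exact ⟨by simpa [betaY] using hxl, hxr⟩
    | succ n ih =>
      rw [abs_le] at ih ⊢
      show -M ≤ β * betaY β x n - (if 0 ≤ betaY β x n then 1 else -1) ∧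
        β * betaY β x n - (if 0 ≤ betaY β x n then 1 else -1) ≤ M
      split_ifs with h
      · constructor
        · nlinarith [mul_nonneg hβ0.le h]
        · nlinarith [mul_le_mul_of_nonneg_left ih.2 hβ0.le]
      · push_neg at h
        constructor
        · nlinarith [mul_le_mul_of_nonneg_left ih.1 hβ0.le]
        · nlinarith [mul_nonpos_of_nonneg_of_nonpos hβ0.le h.le]
  -- partial sums
  have part : ∀ n, x = (∑ j ∈ Finset.range n, b j * β⁻¹ ^ (j + 1))
      + β⁻¹ ^ n * betaY β x n := by
    intro n
    induction n with
    | zero => simp [betaY]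
    | succ n ih =>
      rw [Finset.sum_range_succ]
      have hstep : β⁻¹ ^ (n + 1) * β = β⁻¹ ^ n := by
        rw [pow_succ, mul_assoc, inv_mul_cancel₀ hβne, mul_one]
      have hY : betaY β x (n + 1) = β * betaY β x n - b n := rfl
      have hkey : β⁻¹ ^ n * betaY β x n
          = b n * β⁻¹ ^ (n + 1) + β⁻¹ ^ (n + 1) * betaY β x (n + 1) :=
        calc β⁻¹ ^ n * betaY β x n
            = (β⁻¹ ^ (n + 1) * β) * betaY β x n := by rw [hstep]
          _ = b n * β⁻¹ ^ (n + 1) + β⁻¹ ^ (n + 1) * (β * betaY β x n - b n) := by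
              ring
          _ = b n * β⁻¹ ^ (n + 1) + β⁻¹ ^ (n + 1) * betaY β x (n + 1) := by
              rw [hY]
      linarith [ih, hkey]
  have hr0 : (0:ℝ) ≤ β⁻¹ := (inv_pos.mpr hβ0).le
  have hrlt : β⁻¹ < 1 := inv_lt_one_of_one_lt₀ hβ1
  have hb1 : ∀ j, |b j| = 1 := by
    intro j
    rw [hbn]
    split_ifs <;> norm_num
  -- summability
  have hle : ∀ j, ‖b j * β⁻¹ ^ (j + 1)‖ ≤ β⁻¹ * β⁻¹ ^ j := by
    intro j
    rw [Real.norm_eq_abs, abs_mul, hb1, one_mul, abs_pow, abs_of_nonneg hr0,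
      pow_succ, mul_comm]
  have hg : Summable (fun j : ℕ => β⁻¹ * β⁻¹ ^ j) :=
    (summable_geometric_of_lt_one hr0 hrlt).mul_left _
  have hsum : Summable (fun j => b j * β⁻¹ ^ (j + 1)) :=
    Summable.of_norm (Summable.of_nonneg_of_le (fun j => norm_nonneg _) hle hg)
  -- remainder tends to zero
  have h0 : Filter.Tendsto (fun n => β⁻¹ ^ n * betaY β x n) Filter.atTop (nhds 0) := by
    have hbound : ∀ n, ‖β⁻¹ ^ n * betaY β x n‖ ≤ β⁻¹ ^ n * M := by
      intro n
      rw [Real.norm_eq_abs, abs_mul, abs_pow, abs_of_nonneg hr0]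
      exact mul_le_mul_of_nonneg_left (inv n) (pow_nonneg hr0 n)
    have hlim : Filter.Tendsto (fun n => β⁻¹ ^ n * M) Filter.atTop (nhds 0) := by
      have := (tendsto_pow_atTop_nhds_zero_of_lt_one hr0 hrlt).mul_const M
      simpa using this
    exact squeeze_zero_norm hbound hlim
  -- partial sums tend to x
  have hS : Filter.Tendsto (fun n => ∑ j ∈ Finset.range n, b j * β⁻¹ ^ (j + 1))
      Filter.atTop (nhds x) := by
    have heq : (fun n => ∑ j ∈ Finset.range n, b j * β⁻¹ ^ (j + 1))
        = fun n => x - β⁻¹ ^ n * betaY β x n := by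
      funext n; linarith [part n]
    rw [heq]
    simpa using tendsto_const_nhds.sub h0
  have hx' : x = ∑' j : ℕ, b j * β⁻¹ ^ (j + 1) :=
    tendsto_nhds_unique hS hsum.hasSum.tendsto_sum_nat
  refine ⟨b, ?_, ?_⟩
  · intro j
    rw [hbn]
    split_ifs <;> simp
  · rw [hx']
    apply tsum_congr
    intro j
    congr 1
    rw [show (-(j:ℤ) - 1) = -((j + 1 : ℕ) : ℤ) by push_cast; ring,
      zpow_neg, zpow_natCast, inv_pow]
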